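/- Degenerated wheel equation: Let A be a generic line arrangement in K² with normals α's, and suppose the (distinct) forms on K^n given by α_{i_l i_{l+1} j_l} = Δ_{i_{l+1} j_l} e*_{i_l} − Δ_{i_l j_l} e*_{i_{l+1}} + Δ_{i_l i_{l+1}} e*_{j_l}, for l = 1,…,n (indices of i cyclic mod n, the i_l pairwise distinct, and each i_l appearing in no other form), together with some additional forms not involving any e*_{i_l}, form a minimally linearly dependent set. Then ∏_{l=1}^n Δ_{j_l i_l} − ∏_{l=1}^n Δ_{j_l i_{l+1}} = 0. -/
import Mathlib


/-- The 2×2 determinant `Δ(u,v) = u₀v₁ − u₁v₀` of two vectors in `K²`. -/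
def Det2 {K : Type*} [Field K] (u v : Fin 2 → K) : K := u 0 * v 1 - u 1 * v 0

/-- The normal form `α_{i_l i_{l+1} j_l} = Δ_{i_{l+1} j_l} e*_{i_l} −
Δ_{i_l j_l} e*_{i_{l+1}} + Δ_{i_l i_{l+1}} e*_{j_l}` on `K^N`
(`l+1` taken cyclically in `Fin n`, here `n = m+3`). -/
def degWheelForm {K : Type*} [Field K] {N m : ℕ} (α : Fin N → (Fin 2 → K))
    (i j : Fin (m + 3) → Fin N) (l : Fin (m + 3)) : Fin N → K :=
  Det2 (α (i (l + 1))) (α (j l)) • (Pi.single (i l) 1 : Fin N → K)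
    - Det2 (α (i l)) (α (j l)) • (Pi.single (i (l + 1)) 1 : Fin N → K)
    + Det2 (α (i l)) (α (i (l + 1))) • (Pi.single (j l) 1 : Fin N → K)

lemma Det2_skew {K : Type*} [Field K] (u v : Fin 2 → K) : Det2 u v = - Det2 v u := by
  unfold Det2; ring

/-- degenerated wheel equation: let `α` be the normals of a generic
line arrangement in `K²` (pairwise linearly independent), with `n = m+3 ≥ 3`, indices
`i : Fin n → Fin N` pairwise distinct and cyclic, `j : Fin n → Fin N` disjoint from
the `i`'s, the forms `degWheelForm α i j l` for `l`, together with additional forms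
`w q` not involving any coordinate `e*_{i l}`, forming a minimally linearly dependent
set (i.e. vanishing of a nontrivial combination with all coefficients nonzero).
Then `∏_l Δ_{j_l i_l} − ∏_l Δ_{j_l i_{l+1}} = 0`. -/
theorem degenerated_wheel_equation {K : Type*} [Field K] {N m M : ℕ}
    (α : Fin N → (Fin 2 → K))
    (hgen : ∀ p q : Fin N, p ≠ q → Det2 (α p) (α q) ≠ 0)
    (i j : Fin (m + 3) → Fin N)
    (hi : Function.Injective i)
    (hij : ∀ l l' : Fin (m + 3), i l ≠ j l')
    (w : Fin M → (Fin N → K))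
    (hw : ∀ (q : Fin M) (l : Fin (m + 3)), w q (i l) = 0)
    (c : Fin (m + 3) → K) (d : Fin M → K)
    (hc : ∀ l, c l ≠ 0) (hd : ∀ q, d q ≠ 0)
    (hdep : ∑ l, c l • degWheelForm α i j l + ∑ q, d q • w q = 0) :
    ∏ l : Fin (m + 3), Det2 (α (j l)) (α (i l))
      - ∏ l : Fin (m + 3), Det2 (α (j l)) (α (i (l + 1))) = 0 := by
  have key : ∀ l : Fin (m+3),
      c (l+1) * Det2 (α (i (l+1+1))) (α (j (l+1))) = c l * Det2 (α (i l)) (α (j l)) := by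
    intro l
    have h := congrFun hdep (i (l+1))
    simp only [Pi.add_apply, Finset.sum_apply, Pi.smul_apply, smul_eq_mul,
      Pi.zero_apply] at h
    have hw0 : ∑ q, d q * w q (i (l+1)) = 0 := by simp [hw]
    rw [hw0, add_zero] at h
    have hterm : ∀ l' : Fin (m+3), c l' * degWheelForm α i j l' (i (l+1))
        = (if l' = l + 1 then c (l+1) * Det2 (α (i (l+1+1))) (α (j (l+1))) else 0)
          - (if l' = l then c l * Det2 (α (i l)) (α (j l)) else 0) := by
      intro l'
      have hne11 : l + 1 ≠ l := by
        intro hcon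
        have h10 : (1 : Fin (m+3)) = 0 := left_eq_add.mp hcon.symm
        have := Fin.one_eq_zero_iff.mp h10
        omega
      unfold degWheelForm
      simp only [Pi.add_apply, Pi.sub_apply, Pi.smul_apply, smul_eq_mul,
        Pi.single_apply, hi.eq_iff, hij (l+1) l']
      by_cases h1 : l + 1 = l' <;> by_cases h2 : l = l'
      · exact absurd (h1.trans h2.symm) hne11
      · subst h1
        simp [hne11, (show (l:Fin (m+3)) + 1 ≠ l from hne11)]
      · subst h2
        simp [hne11, (show (l:Fin (m+3)) ≠ l + 1 from fun h => hne11 h.symm)]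
      · have hA : l' ≠ l + 1 := fun h => h1 h.symm
        have hB : l' ≠ l := fun h => h2 h.symm
        simp [h1, h2, hA, hB]
    rw [Finset.sum_congr rfl (fun l' _ => hterm l'), Finset.sum_sub_distrib,
      Finset.sum_ite_eq' Finset.univ (l+1), Finset.sum_ite_eq' Finset.univ l] at h
    simp only [Finset.mem_univ, if_true] at h
    exact sub_eq_zero.mp h
  have hne : ∏ l : Fin (m+3), c l ≠ 0 := Finset.prod_ne_zero_iff.mpr fun l _ => hc l
  have h1 : ∏ l : Fin (m+3), (c (l+1) * Det2 (α (i (l+1+1))) (α (j (l+1))))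
      = ∏ l : Fin (m+3), (c l * Det2 (α (i (l+1))) (α (j l))) :=
    Fintype.prod_equiv (Equiv.addRight 1)
      (fun l => c (l+1) * Det2 (α (i (l+1+1))) (α (j (l+1))))
      (fun l => c l * Det2 (α (i (l+1))) (α (j l))) (fun l => rfl)
  have h2 : ∏ l : Fin (m+3), (c l * Det2 (α (i (l+1))) (α (j l)))
      = ∏ l : Fin (m+3), (c l * Det2 (α (i l)) (α (j l))) := by
    rw [← h1]; exact Finset.prod_congr rfl fun l _ => key l
  rw [Finset.prod_mul_distrib, Finset.prod_mul_distrib] at h2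
  have hprod : ∏ l : Fin (m+3), Det2 (α (i (l+1))) (α (j l))
      = ∏ l : Fin (m+3), Det2 (α (i l)) (α (j l)) := mul_left_cancel₀ hne h2
  rw [sub_eq_zero]
  calc ∏ l : Fin (m+3), Det2 (α (j l)) (α (i l))
      = ∏ l : Fin (m+3), (-1 : K) * Det2 (α (i l)) (α (j l)) := by
        exact Finset.prod_congr rfl fun l _ => by rw [Det2_skew (α (j l))]; ring
    _ = ∏ l : Fin (m+3), (-1 : K) * Det2 (α (i (l+1))) (α (j l)) := by
        rw [Finset.prod_mul_distrib, Finset.prod_mul_distrib, hprod]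
    _ = ∏ l : Fin (m+3), Det2 (α (j l)) (α (i (l+1))) := by
        exact Finset.prod_congr rfl fun l _ => by rw [Det2_skew (α (j l))]; ring
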